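/- Let η be the 3×3 diagonal matrix diag(1, −1, −1), and let so(1,2) = {l ∈ M₃(ℝ) : lᵀ·η + η·l = 0}. Let U = {(T, x, y) ∈ ℝ³ : (x, y) ≠ (0, 0)} and let f : U → ℝ³ be continuously differentiable such that Df(Z)(l·Z) = l·f(Z) for every Z ∈ U and every l ∈ so(1,2). Then there exists a differentiable function ψ : U → ℝ such that f(Z) = ψ(Z)·Z for every Z ∈ U, and Dψ(Z)(l·Z) = 0 for every Z ∈ U and every l ∈ so(1,2). -/

import Mathlib

/-- Let `η = diag(1,−1,−1)` and
`so(1,2) = {l : lᵀη + ηl = 0}`. On `U = {(T,x,y) : (x,y) ≠ (0,0)}`, every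
continuously differentiable `f : U → ℝ³` with `Df(Z)(l·Z) = l·f(Z)` for all
`l ∈ so(1,2)` is of the form `f(Z) = ψ(Z)•Z` with a differentiable radial
coefficient `ψ`: `Dψ(Z)(l·Z) = 0` on `U` for all `l ∈ so(1,2)`. -/
theorem stmt_14
    (η : Matrix (Fin 3) (Fin 3) ℝ) (hη : η = Matrix.diagonal ![1, -1, -1])
    (so12 : Set (Matrix (Fin 3) (Fin 3) ℝ))
    (hso12 : so12 = {l | l.transpose * η + η * l = 0})
    (U : Set (Fin 3 → ℝ))
    (hU : U = {Z | ¬(Z 1 = 0 ∧ Z 2 = 0)})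
    (f : (Fin 3 → ℝ) → (Fin 3 → ℝ))
    (hf : ContDiffOn ℝ 1 f U)
    (hequiv : ∀ Z ∈ U, ∀ l ∈ so12, fderiv ℝ f Z (l.mulVec Z) = l.mulVec (f Z)) :
    ∃ ψ : (Fin 3 → ℝ) → ℝ,
      (∀ Z ∈ U, DifferentiableAt ℝ ψ Z) ∧
      (∀ Z ∈ U, f Z = ψ Z • Z) ∧
      (∀ Z ∈ U, ∀ l ∈ so12, fderiv ℝ ψ Z (l.mulVec Z) = 0) := by
  have hUopen : IsOpen U := by
    rw [hU]
    have : {Z : Fin 3 → ℝ | ¬(Z 1 = 0 ∧ Z 2 = 0)} =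
        ((fun Z : Fin 3 → ℝ => Z 1) ⁻¹' {x | x ≠ 0}) ∪
        ((fun Z : Fin 3 → ℝ => Z 2) ⁻¹' {x | x ≠ 0}) := by
      ext Z; simp [not_and_or]; tauto
    rw [this]
    exact (isOpen_ne.preimage (continuous_apply 1)).union
      (isOpen_ne.preimage (continuous_apply 2))
  have hden : ∀ Z ∈ U, (Z 1) ^ 2 + (Z 2) ^ 2 ≠ 0 := by
    intro Z hZ
    rw [hU] at hZ
    rcases not_and_or.mp hZ with h | h
    · positivity
    · positivity
  set ψ : (Fin 3 → ℝ) → ℝ :=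
    fun Z => (Z 1 * f Z 1 + Z 2 * f Z 2) / ((Z 1) ^ 2 + (Z 2) ^ 2) with hψ
  have hfd : ∀ Z ∈ U, DifferentiableAt ℝ f Z := fun Z hZ =>
    (hf.differentiableOn one_ne_zero).differentiableAt (hUopen.mem_nhds hZ)
  have hproj : ∀ (i : Fin 3) (Z : Fin 3 → ℝ),
      DifferentiableAt ℝ (fun W : Fin 3 → ℝ => W i) Z := fun i Z =>
    (ContinuousLinearMap.proj i : (Fin 3 → ℝ) →L[ℝ] ℝ).differentiableAt
  have hψd : ∀ Z ∈ U, DifferentiableAt ℝ ψ Z := by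
    intro Z hZ
    rw [hψ]
    have hnum : DifferentiableAt ℝ
        (fun W : Fin 3 → ℝ => W 1 * f W 1 + W 2 * f W 2) Z :=
      (((hproj 1) Z).mul ((ContinuousLinearMap.proj 1 :
        (Fin 3 → ℝ) →L[ℝ] ℝ).differentiableAt.comp Z (hfd Z hZ))).add
        (((hproj 2) Z).mul ((ContinuousLinearMap.proj 2 :
        (Fin 3 → ℝ) →L[ℝ] ℝ).differentiableAt.comp Z (hfd Z hZ)))
    have hdenom : DifferentiableAt ℝ
        (fun W : Fin 3 → ℝ => W 1 ^ 2 + W 2 ^ 2) Z :=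
      (((hproj 1) Z).pow 2).add (((hproj 2) Z).pow 2)
    simp only [div_eq_mul_inv]
    exact hnum.mul (hdenom.inv (hden Z hZ))
  have hkey : ∀ Z ∈ U, f Z = ψ Z • Z := by
    intro Z hZ
    set l₀ : Matrix (Fin 3) (Fin 3) ℝ :=
      !![0, -(Z 2), Z 1; -(Z 2), 0, Z 0; Z 1, -(Z 0), 0] with hl₀
    have hmem : l₀ ∈ so12 := by
      rw [hso12]
      show l₀.transpose * η + η * l₀ = 0
      subst hη
      ext i j
      fin_cases i <;> fin_cases j <;>
        simp [hl₀, Matrix.mul_apply, Fin.sum_univ_three, Matrix.transpose,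
          Matrix.diagonal]
    have hl0Z : l₀.mulVec Z = 0 := by
      funext i
      fin_cases i <;>
        simp [hl₀, Matrix.mulVec, dotProduct, Fin.sum_univ_three] <;> ring
    have key := hequiv Z hZ l₀ hmem
    rw [hl0Z, map_zero] at key
    have e0 := congrFun key.symm 0
    have e1 := congrFun key.symm 1
    have e2 := congrFun key.symm 2
    simp [hl₀, Matrix.mulVec, dotProduct, Fin.sum_univ_three] at e0 e1 e2
    have hne := hden Z hZ
    funext i
    have hi : f Z i * ((Z 1) ^ 2 + (Z 2) ^ 2) =
        (Z 1 * f Z 1 + Z 2 * f Z 2) * Z i := by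
      fin_cases i
      · show f Z 0 * ((Z 1) ^ 2 + (Z 2) ^ 2) = (Z 1 * f Z 1 + Z 2 * f Z 2) * Z 0
        linear_combination Z 1 * e2 - Z 2 * e1
      · show f Z 1 * ((Z 1) ^ 2 + (Z 2) ^ 2) = (Z 1 * f Z 1 + Z 2 * f Z 2) * Z 1
        linear_combination (-(Z 2)) * e0
      · show f Z 2 * ((Z 1) ^ 2 + (Z 2) ^ 2) = (Z 1 * f Z 1 + Z 2 * f Z 2) * Z 2
        linear_combination Z 1 * e0
    rw [Pi.smul_apply, smul_eq_mul, hψ]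
    field_simp
    linarith [hi]
  refine ⟨ψ, hψd, hkey, ?_⟩
  intro Z hZ l hl
  have hZne : Z ≠ 0 := by
    rw [hU] at hZ
    intro h
    exact hZ ⟨by simp [h], by simp [h]⟩
  have heq : f =ᶠ[nhds Z] fun Y => ψ Y • Y :=
    Filter.eventuallyEq_of_mem (hUopen.mem_nhds hZ) hkey
  have hdf : fderiv ℝ f Z = fderiv ℝ (fun Y => ψ Y • Y) Z := heq.fderiv_eq
  have hsm : fderiv ℝ (fun Y : Fin 3 → ℝ => ψ Y • Y) Z =
      ψ Z • fderiv ℝ (fun Y : Fin 3 → ℝ => Y) Z +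
      (fderiv ℝ ψ Z).smulRight Z :=
    fderiv_smul (hψd Z hZ) differentiableAt_fun_id
  have h1 := hequiv Z hZ l hl
  rw [hdf, hsm, hkey Z hZ] at h1
  simp only [ContinuousLinearMap.add_apply, ContinuousLinearMap.smul_apply,
    ContinuousLinearMap.smulRight_apply, fderiv_id',
    ContinuousLinearMap.id_apply, Matrix.mulVec_smul] at h1
  have h2 : (fderiv ℝ ψ Z (l.mulVec Z)) • Z = 0 := by
    have := h1
    rwa [add_eq_left] at this
  rcases smul_eq_zero.mp h2 with h | h
  · exact h
  · exact absurd h hZne
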